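/- Suppose 𝒢(C) is a star topology with center node l and the center is fully stubborn: θ_l = 0. Then F has a unique fixed point x* in Δ_n, and it satisfies: (i) x* lies in the relative interior int Δ_n; (ii) x*_i = 1/n for every fully stubborn i with i ≠ l; (iii) for every partially stubborn i, x*_i = (n − √(n² − 4nθ_i(1 − θ_i)))/(2nθ_i) and x*_i < 1/n, and this value is strictly decreasing as a function of θ_i; (iv) x*_l = 1/n + (1/n)Σ_{j partially stubborn} θ_j(1 − x*_j)/(1 − θ_j x*_j) and x*_l > 1/n. -/

import Mathlib

open Matrix

noncomputable def Wmat {n : ℕ} (C : Matrix (Fin n) (Fin n) ℝ) (x : Fin n → ℝ) :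
    Matrix (Fin n) (Fin n) ℝ :=
  Matrix.diagonal x + (1 - Matrix.diagonal x) * C

/-- `F(x) = (I - Θ)(I - W(x)ᵀΘ)⁻¹ (1/n) 1_n` -/
noncomputable def Fmap {n : ℕ} (C : Matrix (Fin n) (Fin n) ℝ) (θ : Fin n → ℝ)
    (x : Fin n → ℝ) : Fin n → ℝ :=
  ((1 - Matrix.diagonal θ) * (1 - (Wmat C x)ᵀ * Matrix.diagonal θ)⁻¹).mulVec
    (fun _ => 1 / (n : ℝ))

/-- The simplex `Δ_n`. -/
def simplex (n : ℕ) : Set (Fin n → ℝ) := {x | (∀ i, 0 ≤ x i) ∧ ∑ i, x i = 1}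


/-- the smaller root of `n t x² - n x + (1-t) = 0`. -/
noncomputable def rfun (n : ℕ) (t : ℝ) : ℝ :=
  ((n : ℝ) - Real.sqrt ((n : ℝ) ^ 2 - 4 * n * t * (1 - t))) / (2 * n * t)

lemma rfun_spec {n : ℕ} (hn : 2 ≤ n) {t : ℝ} (ht0 : 0 < t) (ht1 : t < 1) :
    0 < rfun n t ∧ rfun n t < 1 / n ∧
      (n : ℝ) * t * (rfun n t) ^ 2 - n * (rfun n t) + (1 - t) = 0 := by
  have hn2 : (2 : ℝ) ≤ (n : ℝ) := by exact_mod_cast hn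
  have hnpos : (0 : ℝ) < n := by linarith
  set D : ℝ := (n : ℝ) ^ 2 - 4 * n * t * (1 - t) with hDdef
  have hD0 : 0 < D := by nlinarith [sq_nonneg (1 - 2 * t)]
  set s : ℝ := Real.sqrt D with hsdef
  have hs0 : 0 ≤ s := Real.sqrt_nonneg D
  have hs2 : s ^ 2 = D := Real.sq_sqrt hD0.le
  have hsn : s < n := by
    have : D < (n : ℝ) ^ 2 := by
      have := mul_pos (mul_pos hnpos ht0) (sub_pos.2 ht1)
      nlinarith [hDdef]
    nlinarith
  have hden : 0 < 2 * (n : ℝ) * t := by positivity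
  have hr0 : 0 < rfun n t := by
    apply div_pos (by linarith) hden
  have hslt : (n : ℝ) - 2 * t < s := by
    have h1 : ((n : ℝ) - 2 * t) ^ 2 < D := by
      have h2 : 0 < t ^ 2 * ((n:ℝ) - 1) := mul_pos (by positivity) (by linarith)
      nlinarith [hDdef]
    nlinarith [hs0]
  refine ⟨hr0, ?_, ?_⟩
  · rw [rfun, div_lt_div_iff₀ hden hnpos]
    nlinarith
  · rw [rfun, ← hDdef, ← hsdef]
    field_simp
    nlinarith [hs2]

lemma rfun_unique {n : ℕ} (hn : 2 ≤ n) {t y : ℝ} (ht0 : 0 < t) (ht1 : t < 1)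
    (hy : y ≤ 1) (hq : (n : ℝ) * t * y ^ 2 - n * y + (1 - t) = 0) : y = rfun n t := by
  have hn2 : (2 : ℝ) ≤ (n : ℝ) := by exact_mod_cast hn
  have hnpos : (0 : ℝ) < n := by linarith
  obtain ⟨hr0, hrn, hrq⟩ := rfun_spec hn ht0 ht1
  set r := rfun n t
  -- the larger root
  set D : ℝ := (n : ℝ) ^ 2 - 4 * n * t * (1 - t) with hDdef
  have hD0 : 0 < D := by nlinarith [sq_nonneg (1 - 2 * t)]
  set s : ℝ := Real.sqrt D with hsdef
  have hs0 : 0 ≤ s := Real.sqrt_nonneg D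
  have hs2 : s ^ 2 = D := Real.sq_sqrt hD0.le
  have hspos : 0 < s := Real.sqrt_pos.2 hD0
  set r' : ℝ := ((n : ℝ) + s) / (2 * n * t) with hr'def
  have hden : 0 < 2 * (n : ℝ) * t := by positivity
  have hrdef : r = ((n : ℝ) - s) / (2 * n * t) := rfl
  have hsum : r + r' = 1 / t := by
    rw [hrdef, hr'def, ← add_div]
    rw [show (n:ℝ) - s + ((n:ℝ) + s) = 2 * n by ring]
    rw [div_eq_div_iff hden.ne' ht0.ne']
    ring
  have hr'1 : 1 < r' := by
    rw [hr'def, lt_div_iff₀ hden]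
    rcases le_or_gt s ((n:ℝ) * (2 * t - 1)) with h | h
    · nlinarith [mul_self_le_mul_self hs0 h, hs2, hDdef,
        mul_pos (mul_pos (mul_pos hnpos ht0) (sub_pos.2 ht1))
          (show (0:ℝ) < (n:ℝ) - 1 by linarith)]
    · nlinarith
  -- factor
  have hfac : (y - r) * ((n : ℝ) * t * (y + r) - n) = 0 := by
    linear_combination hq - hrq
  have h2 : (n : ℝ) * t * (y + r) - n < 0 := by
    have : y + r < r + r' := by linarith
    rw [hsum] at this
    have : t * (y + r) < 1 := by
      rw [lt_div_iff₀ ht0] at this; linarith [this]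
    nlinarith
  have := mul_eq_zero.1 hfac
  rcases this with h | h
  · linarith
  · exact absurd h (by linarith)

lemma rfun_strictAntiOn {n : ℕ} (hn : 2 ≤ n) :
    StrictAntiOn (fun t : ℝ => ((n : ℝ) - Real.sqrt ((n : ℝ) ^ 2 - 4 * n * t * (1 - t))) / (2 * n * t))
      (Set.Ioo 0 1) := by
  have hn2 : (2 : ℝ) ≤ (n : ℝ) := by exact_mod_cast hn
  intro a ha b hb hab
  obtain ⟨ha0, ha1⟩ := ha
  obtain ⟨hb0, hb1⟩ := hb
  obtain ⟨hA0, hAn, hAq⟩ := rfun_spec hn ha0 ha1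
  obtain ⟨hB0, hBn, hBq⟩ := rfun_spec hn hb0 hb1
  show rfun n b < rfun n a
  set p := rfun n a
  set q := rfun n b
  by_contra hc
  push_neg at hc
  -- from quadratics: a * (1 - n p²) = 1 - n p, b * (1 - n q²) = 1 - n q
  have hap : a * (1 - (n:ℝ) * p ^ 2) = 1 - n * p := by linear_combination -hAq
  have hbq : b * (1 - (n:ℝ) * q ^ 2) = 1 - n * q := by linear_combination -hBq
  have hnp : (n:ℝ) * p < 1 := by
    rw [lt_div_iff₀ (by linarith : (0:ℝ) < (n:ℝ))] at hAn; linarith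
  have hnq : (n:ℝ) * q < 1 := by
    rw [lt_div_iff₀ (by linarith : (0:ℝ) < (n:ℝ))] at hBn; linarith
  have h1 : 0 < 1 - (n:ℝ) * p ^ 2 := by nlinarith [hA0, hnp]
  have h2 : 0 < 1 - (n:ℝ) * q ^ 2 := by nlinarith [hB0, hnq]
  have hkey : (b - a) * ((1 - (n:ℝ) * q ^ 2) * (1 - n * p ^ 2)) =
      (n:ℝ) * (p - q) * (1 - p - q + n * p * q) := by
    linear_combination (1 - (n:ℝ) * p ^ 2) * hbq - (1 - (n:ℝ) * q ^ 2) * hap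
  have hpos : 0 < 1 - p - q + (n:ℝ) * p * q := by
    nlinarith [mul_pos hA0 hB0, hnp, hnq, mul_pos hA0 hB0]
  nlinarith [mul_pos (sub_pos.2 hab) (mul_pos h2 h1), mul_nonneg (mul_nonneg (by linarith : (0:ℝ) ≤ (n:ℝ)) (sub_nonneg.2 hc)) hpos.le]

lemma Wmat_apply {n : ℕ} (C : Matrix (Fin n) (Fin n) ℝ) (x : Fin n → ℝ) (i j : Fin n) :
    Wmat C x i j = (if i = j then x i else 0) + (1 - x i) * C i j := by
  simp [Wmat, Matrix.sub_mul, Matrix.add_apply, Matrix.sub_apply, Matrix.diagonal_mul,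
    Matrix.diagonal_apply]
  ring

lemma Wmat_row_sum {n : ℕ} (C : Matrix (Fin n) (Fin n) ℝ) (hCrow : ∀ i, ∑ j, C i j = 1)
    (x : Fin n → ℝ) (i : Fin n) : ∑ j, Wmat C x i j = 1 := by
  simp only [Wmat_apply]
  rw [Finset.sum_add_distrib, ← Finset.mul_sum, hCrow, Finset.sum_ite_eq Finset.univ i]
  simp

lemma fix_iff {n : ℕ} (hn : 1 ≤ n) (C : Matrix (Fin n) (Fin n) ℝ)
    (hCnonneg : ∀ i j, 0 ≤ C i j) (hCrow : ∀ i, ∑ j, C i j = 1)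
    (θ : Fin n → ℝ) (hθ0 : ∀ i, 0 ≤ θ i) (hθ1 : ∀ i, θ i < 1)
    (x : Fin n → ℝ) (hx0 : ∀ i, 0 ≤ x i) (hx1 : ∀ i, x i ≤ 1) :
    Fmap C θ x = x ↔
      ∀ i, x i / (1 - θ i) - ∑ j, (Wmat C x) j i * θ j * (x j / (1 - θ j)) = 1 / n := by
  have hθne : ∀ i, (1 : ℝ) - θ i ≠ 0 := fun i => by have := hθ1 i; intro h; linarith
  have hW0 : ∀ i j, 0 ≤ Wmat C x i j := by
    intro i j
    rw [Wmat_apply]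
    have h1 : (0:ℝ) ≤ (1 - x i) * C i j := mul_nonneg (by linarith [hx1 i]) (hCnonneg i j)
    split_ifs with h
    · linarith [hx0 i]
    · linarith
  have hWle : ∀ i j, Wmat C x i j ≤ 1 := by
    intro i j
    have := Finset.single_le_sum (f := fun j => Wmat C x i j) (fun k _ => hW0 i k)
      (Finset.mem_univ j)
    rw [Wmat_row_sum C hCrow] at this
    exact this
  set B := 1 - (Wmat C x)ᵀ * Matrix.diagonal θ with hBdef
  have hB : ∀ i j, B i j = (if i = j then 1 else 0) - Wmat C x j i * θ j := by
    intro i j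
    simp [hBdef, Matrix.sub_apply, Matrix.one_apply, Matrix.mul_diagonal,
      Matrix.transpose_apply]
  have hdet : B.det ≠ 0 := by
    apply det_ne_zero_of_sum_col_lt_diag
    intro k
    have h1 : ∀ i ∈ Finset.univ.erase k, ‖B i k‖ = Wmat C x k i * θ k := by
      intro i hi
      have hik : i ≠ k := Finset.ne_of_mem_erase hi
      rw [hB, if_neg hik, zero_sub, norm_neg, Real.norm_eq_abs,
        abs_of_nonneg (mul_nonneg (hW0 k i) (hθ0 k))]
    rw [Finset.sum_congr rfl h1]
    have h2 : ∑ i ∈ Finset.univ.erase k, Wmat C x k i * θ k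
        = (1 - Wmat C x k k) * θ k := by
      rw [← Finset.sum_mul, Finset.sum_erase_eq_sub (Finset.mem_univ k),
        Wmat_row_sum C hCrow]
    rw [h2, hB, if_pos rfl, Real.norm_eq_abs]
    have h3 : Wmat C x k k * θ k ≤ θ k := by
      nlinarith [hWle k k, hθ0 k, hW0 k k]
    rw [abs_of_nonneg (by linarith [hθ1 k])]
    nlinarith [hθ1 k, hW0 k k, hθ0 k]
  have hU : IsUnit B.det := isUnit_iff_ne_zero.2 hdet
  set z : Fin n → ℝ := fun i => x i / (1 - θ i) with hzdef
  set v : Fin n → ℝ := fun _ => 1 / (n : ℝ) with hvdef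
  have hFeq : Fmap C θ x = (1 - Matrix.diagonal θ).mulVec (B⁻¹.mulVec v) := by
    rw [Fmap, Matrix.mulVec_mulVec]
  have hDz : (1 - Matrix.diagonal θ).mulVec z = x := by
    funext i
    rw [Matrix.sub_mulVec, Matrix.one_mulVec, Pi.sub_apply, Matrix.mulVec_diagonal]
    show z i - θ i * z i = x i
    rw [hzdef]
    simp only []
    rw [mul_div_assoc' (θ i), div_sub_div_same, div_eq_iff (hθne i)]
    ring
  have hBz_iff : ∀ w : Fin n → ℝ, (B.mulVec w) = (fun i => w i - ∑ j, Wmat C x j i * θ j * w j) := by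
    intro w
    funext i
    rw [Matrix.mulVec, dotProduct]
    simp only [hB, sub_mul, ite_mul, one_mul, zero_mul, Finset.sum_sub_distrib,
      Finset.sum_ite_eq Finset.univ i, Finset.mem_univ, if_pos]
  constructor
  · intro hfix
    have h2 : (1 - Matrix.diagonal θ).mulVec (B⁻¹.mulVec v) = (1 - Matrix.diagonal θ).mulVec z := by
      rw [hDz, ← hFeq, hfix]
    have h3 : B⁻¹.mulVec v = z := by
      funext i
      have := congrFun h2 i
      rw [Matrix.sub_mulVec, Matrix.one_mulVec, Pi.sub_apply, Matrix.mulVec_diagonal,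
        Matrix.sub_mulVec, Matrix.one_mulVec, Pi.sub_apply, Matrix.mulVec_diagonal] at this
      have h4 : (1 - θ i) * (B⁻¹.mulVec v i) = (1 - θ i) * z i := by ring_nf; ring_nf at this; linarith
      exact mul_left_cancel₀ (hθne i) h4
    have h5 : B.mulVec z = v := by
      rw [← h3, Matrix.mulVec_mulVec, Matrix.mul_nonsing_inv _ hU, Matrix.one_mulVec]
    intro i
    have := congrFun h5 i
    rw [hBz_iff] at this
    exact this
  · intro hP
    have h5 : B.mulVec z = v := by
      rw [hBz_iff]
      funext i
      exact hP i
    have h3 : B⁻¹.mulVec v = z := by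
      rw [← h5, Matrix.mulVec_mulVec, Matrix.nonsing_inv_mul _ hU, Matrix.one_mulVec]
    rw [hFeq, h3, hDz]

theorem stmt13 (n : ℕ) (hn : 2 ≤ n) (C : Matrix (Fin n) (Fin n) ℝ)
    (hCnonneg : ∀ i j, 0 ≤ C i j) (hCrow : ∀ i, ∑ j, C i j = 1)
    (hCdiag : ∀ i, C i i = 0)
    (θ : Fin n → ℝ) (hθ0 : ∀ i, 0 ≤ θ i) (hθ1 : ∀ i, θ i < 1) (hθex : ∃ j, 0 < θ j)
    (l : Fin n) (hstar : ∀ i, i ≠ l → C i l = 1 ∧ ∀ j, j ≠ l → C i j = 0)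
    (hl : θ l = 0) :
    ∃ xstar : Fin n → ℝ,
      (xstar ∈ simplex n ∧ Fmap C θ xstar = xstar) ∧
      (∀ y, y ∈ simplex n ∧ Fmap C θ y = y → y = xstar) ∧
      (∀ i, 0 < xstar i) ∧
      (∀ i, θ i = 0 → i ≠ l → xstar i = 1 / n) ∧
      (∀ i, 0 < θ i →
        xstar i = ((n : ℝ) - Real.sqrt ((n : ℝ) ^ 2 - 4 * n * θ i * (1 - θ i))) /
            (2 * n * θ i) ∧
        xstar i < 1 / n) ∧
      StrictAntiOn
        (fun t : ℝ => ((n : ℝ) - Real.sqrt ((n : ℝ) ^ 2 - 4 * n * t * (1 - t))) / (2 * n * t))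
        (Set.Ioo 0 1) ∧
      (xstar l = 1 / n + (1 / n) *
          ∑ j ∈ Finset.univ.filter (fun j => 0 < θ j),
            θ j * (1 - xstar j) / (1 - θ j * xstar j)) ∧
      1 / (n : ℝ) < xstar l := by
  classical
  have hn2 : (2 : ℝ) ≤ (n : ℝ) := by exact_mod_cast hn
  have hnpos : (0 : ℝ) < n := by linarith
  have hθne : ∀ i, (1 : ℝ) - θ i ≠ 0 := fun i => by have := hθ1 i; intro h; linarith
  have hθl : ∀ j, 0 < θ j → j ≠ l := fun j hj hjl => by rw [hjl, hl] at hj; exact lt_irrefl 0 hj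
  -- the candidate off-center coordinates
  set g : Fin n → ℝ := fun i => if 0 < θ i then rfun n (θ i) else 1 / n with hgdef
  have hg_pos : ∀ i, 0 < g i := by
    intro i
    rw [hgdef]
    dsimp only
    split_ifs with h
    · exact (rfun_spec hn h (hθ1 i)).1
    · positivity
  have hg_le : ∀ i, g i ≤ 1 / n := by
    intro i
    rw [hgdef]
    dsimp only
    split_ifs with h
    · exact (rfun_spec hn h (hθ1 i)).2.1.le
    · exact le_refl _
  have hg_lt1 : ∀ i, g i < 1 := by
    intro i
    have h1 : (1 : ℝ) / n ≤ 1 / 2 := by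
      apply div_le_div_of_nonneg_left <;> linarith
    linarith [hg_le i]
  have hg_quad : ∀ i, 0 < θ i →
      (n : ℝ) * θ i * (g i) ^ 2 - n * (g i) + (1 - θ i) = 0 := by
    intro i h
    have h2 := (rfun_spec hn h (hθ1 i)).2.2
    rw [hgdef]
    dsimp only
    rw [if_pos h]
    exact h2
  have hg_lt : ∀ i, 0 < θ i → g i < 1 / n := by
    intro i h
    rw [hgdef]; dsimp only; rw [if_pos h]
    exact (rfun_spec hn h (hθ1 i)).2.1
  have hθg : ∀ j, 0 < 1 - θ j * g j := by
    intro j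
    nlinarith [hθ0 j, hθ1 j, hg_pos j, hg_lt1 j]
  set T : Finset (Fin n) := Finset.univ.filter (fun j => 0 < θ j) with hTdef
  have hTl : l ∉ T := by
    simp [hTdef, hl]
  have hmemT : ∀ j ∈ T, 0 < θ j := by
    intro j hj
    simpa [hTdef] using hj
  set S : ℝ := ∑ j ∈ T, θ j * (1 - g j) / (1 - θ j * g j) with hSdef
  have hterm_pos : ∀ j ∈ T, 0 < θ j * (1 - g j) / (1 - θ j * g j) := by
    intro j hj
    have h1 := hmemT j hj
    apply div_pos (mul_pos h1 (by linarith [hg_lt1 j])) (hθg j)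
  have hterm_le : ∀ j ∈ T, θ j * (1 - g j) / (1 - θ j * g j) ≤ 1 := by
    intro j hj
    rw [div_le_one (hθg j)]
    nlinarith [hθ1 j, hg_pos j]
  have hS_pos : 0 < S := by
    obtain ⟨j, hj⟩ := hθex
    exact Finset.sum_pos' (fun k hk => (hterm_pos k hk).le)
      ⟨j, by simp [hTdef, hj], hterm_pos j (by simp [hTdef, hj])⟩
  have hS_le : S ≤ (n : ℝ) - 1 := by
    have h1 : S ≤ (T.card : ℝ) := by
      rw [hSdef]
      calc ∑ j ∈ T, θ j * (1 - g j) / (1 - θ j * g j) ≤ ∑ j ∈ T, (1 : ℝ) :=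
            Finset.sum_le_sum hterm_le
        _ = (T.card : ℝ) := by simp
    have h2 : T.card ≤ n - 1 := by
      have h3 : T ⊆ Finset.univ.erase l := by
        intro j hj
        exact Finset.mem_erase.2 ⟨hθl j (hmemT j hj), Finset.mem_univ j⟩
      calc T.card ≤ (Finset.univ.erase l).card := Finset.card_le_card h3
        _ = n - 1 := by rw [Finset.card_erase_of_mem (Finset.mem_univ l)]; simp
    have h4 : ((T.card : ℕ) : ℝ) ≤ ((n - 1 : ℕ) : ℝ) := by exact_mod_cast h2
    have h5 : ((n - 1 : ℕ) : ℝ) = (n : ℝ) - 1 := by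
      have : 1 ≤ n := by omega
      push_cast [this]
      ring
    linarith
  -- the candidate fixed point
  set xs : Fin n → ℝ := fun i => if i = l then 1 / n + (1 / n) * S else g i with hxsdef
  have hxl : xs l = 1 / n + (1 / n) * S := by rw [hxsdef]; simp
  have hxne : ∀ i, i ≠ l → xs i = g i := by
    intro i hi; rw [hxsdef]; simp [hi]
  have hx_pos : ∀ i, 0 < xs i := by
    intro i
    by_cases hi : i = l
    · rw [hi, hxl]; positivity
    · rw [hxne i hi]; exact hg_pos i
  have hx_le : ∀ i, xs i ≤ 1 := by
    intro i
    by_cases hi : i = l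
    · rw [hi, hxl]
      have h1 : (1 / n : ℝ) * S ≤ (1 / n) * ((n : ℝ) - 1) := by
        apply mul_le_mul_of_nonneg_left hS_le (by positivity)
      have h2 : (1 / n : ℝ) + (1 / n) * ((n : ℝ) - 1) = 1 := by field_simp; ring
      linarith
    · rw [hxne i hi]
      have h1 : (1 : ℝ) / n ≤ 1 := by rw [div_le_one hnpos]; linarith
      linarith [hg_le i]
  -- collapse of the weighted sums
  have hcollapse : ∀ (v : Fin n → ℝ), ∀ i, i ≠ l →
      ∑ j, Wmat C v j i * θ j * (v j / (1 - θ j)) = v i * θ i * (v i / (1 - θ i)) := by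
    intro v i hi
    rw [Finset.sum_eq_single i]
    · rw [Wmat_apply, if_pos rfl, hCdiag]
      ring
    · intro j _ hji
      by_cases hjl : j = l
      · rw [hjl, hl]
        ring
      · rw [Wmat_apply, if_neg hji, (hstar j hjl).2 i hi]
        ring
    · intro h
      exact absurd (Finset.mem_univ i) h
  have hlsum : ∀ (v : Fin n → ℝ),
      ∑ j, Wmat C v j l * θ j * (v j / (1 - θ j)) =
      ∑ j ∈ T, (1 - v j) * (θ j * (v j / (1 - θ j))) := by
    intro v
    rw [← Finset.sum_subset (Finset.subset_univ T)]
    · apply Finset.sum_congr rfl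
      intro j hj
      have hjl : j ≠ l := hθl j (hmemT j hj)
      rw [Wmat_apply, if_neg hjl, (hstar j hjl).1]
      ring
    · intro j _ hj
      have hθj : θ j = 0 := by
        by_contra h
        exact hj (by simp [hTdef, lt_of_le_of_ne (hθ0 j) (Ne.symm h)])
      rw [hθj]
      ring
  -- the fixed-point equations hold for xs
  have hP : ∀ i, xs i / (1 - θ i) - ∑ j, Wmat C xs j i * θ j * (xs j / (1 - θ j)) = 1 / n := by
    intro i
    by_cases hi : i = l
    · rw [hi, hlsum]
      have hsum_eq : ∑ j ∈ T, (1 - xs j) * (θ j * (xs j / (1 - θ j))) = (1 / n) * S := by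
        rw [hSdef, Finset.mul_sum]
        apply Finset.sum_congr rfl
        intro j hj
        have hθj := hmemT j hj
        have hjl : j ≠ l := hθl j hθj
        rw [hxne j hjl]
        have hq := hg_quad j hθj
        have hrw : 1 - θ j = n * g j * (1 - θ j * g j) := by linear_combination hq
        rw [hrw]
        have h1 := (hg_pos j).ne'
        have h2 := (hθg j).ne'
        field_simp
      rw [hsum_eq, hl, hxl]
      ring
    · rw [hcollapse xs i hi, hxne i hi]
      by_cases hθi : 0 < θ i
      · have hq := hg_quad i hθi
        have key : g i / (1 - θ i) - g i * θ i * (g i / (1 - θ i))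
            = (g i * (1 - θ i * g i)) / (1 - θ i) := by
          field_simp
        rw [key, div_eq_div_iff (hθne i) hnpos.ne']
        linear_combination -hq
      · have hθi0 : θ i = 0 := le_antisymm (not_lt.1 hθi) (hθ0 i)
        rw [hθi0, hgdef]
        dsimp only
        rw [if_neg hθi]
        ring
  have hfix : Fmap C θ xs = xs :=
    (fix_iff (by omega) C hCnonneg hCrow θ hθ0 hθ1 xs (fun i => (hx_pos i).le) hx_le).2 hP
  -- the sum of coordinates is 1
  have hsum1 : ∀ (v : Fin n → ℝ),
      (∀ i, v i / (1 - θ i) - ∑ j, Wmat C v j i * θ j * (v j / (1 - θ j)) = 1 / n) →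
      ∑ i, v i = 1 := by
    intro v hPv
    have h1 : ∑ i, (v i / (1 - θ i) - ∑ j, Wmat C v j i * θ j * (v j / (1 - θ j)))
        = ∑ i : Fin n, (1 : ℝ) / n := Finset.sum_congr rfl fun i _ => hPv i
    rw [Finset.sum_sub_distrib, Finset.sum_comm] at h1
    have h2 : ∀ j, ∑ i, Wmat C v j i * θ j * (v j / (1 - θ j))
        = θ j * (v j / (1 - θ j)) := by
      intro j
      rw [show (fun i => Wmat C v j i * θ j * (v j / (1 - θ j)))
          = (fun i => Wmat C v j i * (θ j * (v j / (1 - θ j)))) from funext fun i => by ring]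
      rw [← Finset.sum_mul, Wmat_row_sum C hCrow, one_mul]
    rw [Finset.sum_congr rfl (fun j _ => h2 j)] at h1
    have h3 : ∑ i : Fin n, (1 : ℝ) / n = 1 := by
      rw [Finset.sum_const, Finset.card_univ, Fintype.card_fin, nsmul_eq_mul]
      field_simp
    rw [h3] at h1
    have h4 : ∀ i, v i = v i / (1 - θ i) - θ i * (v i / (1 - θ i)) := by
      intro i
      rw [mul_div_assoc' (θ i), div_sub_div_same, eq_div_iff (hθne i)]
      ring
    calc ∑ i, v i = ∑ i, (v i / (1 - θ i) - θ i * (v i / (1 - θ i))) :=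
          Finset.sum_congr rfl fun i _ => h4 i
      _ = ∑ i, v i / (1 - θ i) - ∑ i, θ i * (v i / (1 - θ i)) := Finset.sum_sub_distrib _ _
      _ = 1 := h1
  refine ⟨xs, ⟨⟨fun i => (hx_pos i).le, hsum1 xs hP⟩, hfix⟩, ?_, hx_pos, ?_, ?_, ?_, ?_, ?_⟩
  · -- uniqueness
    rintro y ⟨⟨hy0, hysum⟩, hyfix⟩
    have hy1 : ∀ i, y i ≤ 1 := by
      intro i
      have := Finset.single_le_sum (f := fun j => y j) (fun k _ => hy0 k) (Finset.mem_univ i)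
      rw [hysum] at this
      exact this
    have hPy := (fix_iff (by omega) C hCnonneg hCrow θ hθ0 hθ1 y hy0 hy1).1 hyfix
    have hyeq : ∀ i, i ≠ l → y i = xs i := by
      intro i hi
      have h1 := hPy i
      rw [hcollapse y i hi] at h1
      by_cases hθi : 0 < θ i
      · have hq : (n : ℝ) * θ i * (y i) ^ 2 - n * (y i) + (1 - θ i) = 0 := by
          have key : y i / (1 - θ i) - y i * θ i * (y i / (1 - θ i))
              = (y i * (1 - θ i * y i)) / (1 - θ i) := by
            field_simp
          rw [key, div_eq_div_iff (hθne i) hnpos.ne'] at h1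
          linear_combination -h1
        have := rfun_unique hn hθi (hθ1 i) (hy1 i) hq
        rw [this, hxne i hi, hgdef]
        dsimp only
        rw [if_pos hθi]
      · have hθi0 : θ i = 0 := le_antisymm (not_lt.1 hθi) (hθ0 i)
        rw [hθi0] at h1
        simp at h1
        rw [hxne i hi, hgdef]
        dsimp only
        rw [if_neg hθi, h1, one_div]
    funext i
    by_cases hi : i = l
    · subst hi
      have h1 := hPy i
      have h2 := hP i
      rw [hlsum, hl] at h1 h2
      have h3 : ∑ j ∈ T, (1 - y j) * (θ j * (y j / (1 - θ j)))
          = ∑ j ∈ T, (1 - xs j) * (θ j * (xs j / (1 - θ j))) := by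
        apply Finset.sum_congr rfl
        intro j hj
        rw [hyeq j (hθl j (hmemT j hj))]
      rw [h3] at h1
      simp only [sub_zero, div_one] at h1 h2
      linarith
    · exact hyeq i hi
  · -- fully stubborn off-center
    intro i hθi hi
    rw [hxne i hi, hgdef]
    dsimp only
    rw [if_neg (by rw [hθi]; exact lt_irrefl 0)]
  · -- partially stubborn
    intro i hθi
    have hi : i ≠ l := hθl i hθi
    constructor
    · rw [hxne i hi, hgdef]
      dsimp only
      rw [if_pos hθi]
      rfl
    · rw [hxne i hi]
      exact hg_lt i hθi
  · exact rfun_strictAntiOn hn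
  · -- formula for center
    rw [hxl, hSdef]
    congr 1
    rw [Finset.mul_sum, Finset.mul_sum]
    apply Finset.sum_congr rfl
    intro j hj
    rw [hxne j (hθl j (hmemT j hj))]
  · rw [hxl]
    have : 0 < (1 / n : ℝ) * S := by positivity
    linarith
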